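/- For a sequence of integers b_i ≥ 2, the series ∑_{ℓ=1}^∞ 2^{ℓ − (b₁+⋯+b_ℓ)} converges and its value equals ?([[b₁,b₂,b₃,…]]), the Minkowski question mark function evaluated at the semi-regular continued fraction [[b₁,b₂,…]]. Equivalently, with regular continued fraction x = [0,a₁,a₂,…], ?(x) = 2^{1−b₁} + 2^{2−(b₁+b₂)} + 2^{3−(b₁+b₂+b₃)} + ⋯ where (b_i) is the semi-regular expansion of x. -/

import Mathlib

open scoped BigOperators

/-- The Minkowski question mark function on `[0,1]`, defined through the
alternating series over the partial denominators of the regular continued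
fraction expansion of `x`. -/
noncomputable def questionMark (x : ℝ) : ℝ :=
  if x = 1 then 1
  else ∑' k : ℕ,
    if ((GenContFract.of x).partDens.get? k).isSome then
      (-1 : ℝ) ^ k *
        (2 : ℝ) ^ ((1 : ℝ) -
          ∑ i ∈ Finset.range (k + 1), ((GenContFract.of x).partDens.get? i).getD 0)
    else 0

/-- Finite semi-regular continued fraction `[[b₁,…,b_m]] = 1/(b₁ - [[b₂,…,b_m]])`,
with the empty continued fraction equal to `0` (so `[[b]] = 1/b`). -/
noncomputable def srcf : List ℝ → ℝ
  | [] => 0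
  | b :: t => 1 / (b - srcf t)

open GenContFract Int Filter

namespace QMaux

noncomputable def D (x : ℝ) (k : ℕ) : Option ℝ := (GenContFract.of x).partDens.get? k

/-- The k-th term in the alternating series. -/

noncomputable def T (x : ℝ) (k : ℕ) : ℝ :=
  if (D x k).isSome then
    (-1 : ℝ) ^ k *
      (2 : ℝ) ^ ((1 : ℝ) - ∑ i ∈ Finset.range (k + 1), (D x i).getD 0)
  else 0

noncomputable def S (x : ℝ) : ℝ := ∑' k : ℕ, T x k

lemma of_s_fract (v : ℝ) (n : ℕ) :
    (GenContFract.of (fract v)).s.get? n = (GenContFract.of v).s.get? n := by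
  rcases eq_or_ne (fract v) 0 with h | h
  · obtain ⟨a, rfl⟩ : ∃ a : ℤ, v = a := ⟨⌊v⌋, (eq_of_sub_eq_zero h)⟩
    rw [Int.fract_intCast]
    rw [show (0:ℝ) = ((0:ℤ):ℝ) by norm_num, of_s_of_int, of_s_of_int]
  · cases n with
    | zero =>
      have h' : fract (fract v) ≠ 0 := by rwa [Int.fract_fract]
      show (GenContFract.of (fract v)).s.head = (GenContFract.of v).s.head
      rw [of_s_head h', of_s_head h, Int.fract_fract]
    | succ n =>
      rw [of_s_succ, of_s_succ, Int.fract_fract]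

lemma D_fract (v : ℝ) (n : ℕ) : D (fract v) n = D v n := by
  unfold D
  unfold GenContFract.partDens
  rw [Stream'.Seq.map_get?, Stream'.Seq.map_get?, of_s_fract]

lemma D_zero {x : ℝ} (h0 : 0 < x) (h1 : x < 1) : D x 0 = some ((⌊x⁻¹⌋ : ℤ) : ℝ) := by
  have hf : fract x = x := Int.fract_eq_self.2 ⟨h0.le, h1⟩
  have h : fract x ≠ 0 := by rw [hf]; exact h0.ne'
  unfold D GenContFract.partDens
  rw [Stream'.Seq.map_get?]
  have := of_s_head h
  rw [show (GenContFract.of x).s.head = (GenContFract.of x).s.get? 0 from rfl] at this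
  rw [this, hf]
  rfl

lemma D_succ {x : ℝ} (h0 : 0 < x) (h1 : x < 1) (n : ℕ) :
    D x (n + 1) = D (fract x⁻¹) n := by
  have hf : fract x = x := Int.fract_eq_self.2 ⟨h0.le, h1⟩
  unfold D GenContFract.partDens
  rw [Stream'.Seq.map_get?, Stream'.Seq.map_get?, of_s_succ, hf, ← of_s_fract x⁻¹]

lemma D_zero_none (k : ℕ) : D 0 k = none := by
  unfold D GenContFract.partDens
  rw [show (0:ℝ) = ((0:ℤ):ℝ) by norm_num, of_s_of_int, Stream'.Seq.map_get?,
    Stream'.Seq.get?_nil]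
  rfl

lemma S_zero : S 0 = 0 := by
  unfold S
  have : ∀ k, T 0 k = 0 := by
    intro k; unfold T; rw [D_zero_none]; simp
  simp [this]

lemma sum_digits_ge {x : ℝ} {k : ℕ} (h : (D x k).isSome) :
    ((k : ℝ) + 1) ≤ ∑ i ∈ Finset.range (k + 1), (D x i).getD 0 := by
  obtain ⟨d, hd⟩ := Option.isSome_iff_exists.mp h
  have key : ∀ i ∈ Finset.range (k + 1), (1:ℝ) ≤ (D x i).getD 0 := by
    intro i hi
    have hik : i ≤ k := Nat.lt_succ_iff.mp (Finset.mem_range.mp hi)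
    obtain ⟨di, hdi⟩ := Stream'.Seq.ge_stable _ hik hd
    rw [show D x i = some di from hdi]
    exact of_one_le_get?_partDen hdi
  calc ((k : ℝ) + 1) = ∑ _i ∈ Finset.range (k + 1), (1:ℝ) := by simp
    _ ≤ _ := Finset.sum_le_sum key

lemma T_bound (x : ℝ) (k : ℕ) : |T x k| ≤ (1/2 : ℝ) ^ k := by
  unfold T
  split_ifs with h
  · rw [abs_mul, abs_pow, abs_neg, abs_one, one_pow, one_mul,
      abs_of_pos (Real.rpow_pos_of_pos two_pos _)]
    have h1 : (1 : ℝ) - ∑ i ∈ Finset.range (k + 1), (D x i).getD 0 ≤ -(k:ℝ) := by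
      have := sum_digits_ge h; linarith
    calc (2:ℝ) ^ ((1 : ℝ) - ∑ i ∈ Finset.range (k + 1), (D x i).getD 0)
        ≤ (2:ℝ) ^ (-(k:ℝ)) := Real.rpow_le_rpow_of_exponent_le one_le_two h1
      _ = (1/2 : ℝ) ^ k := by
          rw [Real.rpow_neg (by norm_num), Real.rpow_natCast, one_div, inv_pow]
  · rw [abs_zero]; positivity

lemma T_summable (x : ℝ) : Summable (T x) :=
  Summable.of_abs (Summable.of_nonneg_of_le (fun k => abs_nonneg _) (T_bound x)
    (summable_geometric_of_lt_one (by norm_num) (by norm_num)))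

lemma S_abs_le (x : ℝ) : |S x| ≤ 2 := by
  have hg : Summable (fun k : ℕ => (1/2:ℝ)^k) :=
    summable_geometric_of_lt_one (by norm_num) (by norm_num)
  have h0 : |S x| ≤ ∑' k, |T x k| := by
    have := norm_tsum_le_tsum_norm (f := T x) (by simpa [Real.norm_eq_abs] using (T_summable x).abs)
    simpa [S, Real.norm_eq_abs] using this
  have h1 : ∑' k, |T x k| ≤ ∑' k : ℕ, (1/2:ℝ)^k :=
    Summable.tsum_le_tsum (T_bound x) ((T_summable x).abs) hg
  have h2 : ∑' k : ℕ, (1/2:ℝ)^k = 2 := by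
    rw [tsum_geometric_of_lt_one (by norm_num) (by norm_num)]; norm_num
  linarith


lemma S_rec {x : ℝ} (h0 : 0 < x) (h1 : x < 1) :
    S x = (2:ℝ)^((1:ℝ) - ((⌊x⁻¹⌋:ℤ):ℝ)) - (2:ℝ)^(-((⌊x⁻¹⌋:ℤ):ℝ)) * S (fract x⁻¹) := by
  set n : ℝ := ((⌊x⁻¹⌋:ℤ):ℝ) with hn
  set r : ℝ := fract x⁻¹ with hr
  have hT0 : T x 0 = (2:ℝ)^((1:ℝ) - n) := by
    unfold T
    simp [Finset.sum_range_one, D_zero h0 h1, hn]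
  have hTs : ∀ k, T x (k+1) = -((2:ℝ)^(-n) * T r k) := by
    intro k
    have hsum : ∑ i ∈ Finset.range (k + 2), (D x i).getD 0
        = n + ∑ i ∈ Finset.range (k + 1), (D r i).getD 0 := by
      rw [Finset.sum_range_succ' (fun i => (D x i).getD 0) (k+1)]
      have : ∀ i, D x (i+1) = D r i := D_succ h0 h1
      simp only [this, D_zero h0 h1]
      rw [add_comm]
      rfl
    unfold T
    rw [show ∀ i, D x (i+1) = D r i from D_succ h0 h1]
    by_cases hk : (D r k).isSome
    · rw [if_pos hk, if_pos hk, hsum]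
      have : (2:ℝ) ^ ((1:ℝ) - (n + ∑ i ∈ Finset.range (k + 1), (D r i).getD 0))
          = (2:ℝ)^(-n) * (2:ℝ) ^ ((1:ℝ) - ∑ i ∈ Finset.range (k + 1), (D r i).getD 0) := by
        rw [← Real.rpow_add two_pos]; ring_nf
      rw [this, pow_succ]
      ring
    · rw [if_neg hk, if_neg hk]; ring
  have hsummable := T_summable x
  rw [show S x = ∑' k, T x k from rfl, Summable.tsum_eq_zero_add hsummable, hT0]
  have : ∑' k : ℕ, T x (k+1) = -((2:ℝ)^(-n) * S r) := by
    rw [tsum_congr hTs, tsum_neg, tsum_mul_left]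
    rfl
  rw [this]
  ring

lemma S_half : S (1/2 : ℝ) = 1/2 := by
  have h := S_rec (x := (1/2:ℝ)) (by norm_num) (by norm_num)
  have hinv : ((1:ℝ)/2)⁻¹ = 2 := by norm_num
  have hfl : ⌊((1:ℝ)/2)⁻¹⌋ = 2 := by
    rw [hinv, show (2:ℝ) = ((2:ℤ):ℝ) by norm_num, Int.floor_intCast]
  have hfr : fract ((1:ℝ)/2)⁻¹ = 0 := by
    rw [hinv, show (2:ℝ) = ((2:ℤ):ℝ) by norm_num, Int.fract_intCast]
  rw [hfl, hfr, S_zero] at h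
  rw [h]
  rw [show (1:ℝ) - ((2:ℤ):ℝ) = -1 by norm_num, Real.rpow_neg_one]
  norm_num

lemma S_reflect_lt {y : ℝ} (h0 : 0 < y) (h2 : y < 1/2) : S (1-y) = 1 - S y := by
  have hy1 : y < 1 := by linarith
  have h2' : (2:ℝ) < y⁻¹ := by
    rw [← one_div, lt_div_iff₀ h0]; linarith
  set c : ℤ := ⌊y⁻¹⌋ with hc
  set f : ℝ := fract y⁻¹ with hf
  have hSy : S y = (2:ℝ)^((1:ℝ) - (c:ℝ)) - (2:ℝ)^(-(c:ℝ)) * S f := S_rec h0 hy1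
  -- the value z = y/(1-y)
  set z : ℝ := y / (1-y) with hz
  have h1y : (0:ℝ) < 1 - y := by linarith
  have hz0 : 0 < z := div_pos h0 h1y
  have hz1 : z < 1 := by
    rw [div_lt_one h1y]; linarith
  have hzinv : z⁻¹ = y⁻¹ - 1 := by
    rw [hz, inv_div]
    field_simp
  have hzfloor : ⌊z⁻¹⌋ = c - 1 := by
    rw [hzinv, show (1:ℝ) = ((1:ℤ):ℝ) by norm_num, Int.floor_sub_intCast]
  have hzfract : fract z⁻¹ = f := by
    rw [hzinv, show (1:ℝ) = ((1:ℤ):ℝ) by norm_num, Int.fract_sub_intCast]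
  have hSz : S z = 2 * S y := by
    have h := S_rec hz0 hz1
    rw [hzfloor, hzfract] at h
    have e1 : (2:ℝ)^((1:ℝ) - ((c-1:ℤ):ℝ)) = 2 * (2:ℝ)^((1:ℝ) - (c:ℝ)) := by
      push_cast
      rw [show (1:ℝ) - ((c:ℝ) - 1) = (1 - (c:ℝ)) + 1 by ring,
        Real.rpow_add two_pos, Real.rpow_one]
      ring
    have e2 : (2:ℝ)^(-((c-1:ℤ):ℝ)) = 2 * (2:ℝ)^(-(c:ℝ)) := by
      push_cast
      rw [show -((c:ℝ) - 1) = (-(c:ℝ)) + 1 by ring,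
        Real.rpow_add two_pos, Real.rpow_one]
      ring
    rw [h, e1, e2, hSy]
    ring
  -- now 1 - y
  have hw0 : 0 < 1 - y := h1y
  have hw1 : 1 - y < 1 := by linarith
  have hwinv1 : (1:ℝ) < (1-y)⁻¹ := by
    rw [lt_inv_comm₀] <;> simp_all <;> linarith
  have hwinv2 : (1-y)⁻¹ < 2 := by
    rw [inv_lt_comm₀ h1y (by norm_num)]; linarith
  have hwfloor : ⌊(1-y)⁻¹⌋ = 1 := by
    have : ((1:ℤ):ℝ) ≤ (1-y)⁻¹ ∧ (1-y)⁻¹ < (1:ℤ) + 1 := by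
      constructor <;> push_cast <;> linarith
    exact Int.floor_eq_iff.mpr (by exact_mod_cast this)
  have hwfract : fract (1-y)⁻¹ = z := by
    rw [Int.fract, hwfloor]
    push_cast
    rw [hz, eq_div_iff h1y.ne']
    field_simp
    ring
  have h := S_rec hw0 hw1
  rw [hwfloor, hwfract, hSz] at h
  rw [h]
  rw [show (1:ℝ) - ((1:ℤ):ℝ) = 0 by norm_num, Real.rpow_zero,
    show -(((1:ℤ):ℝ)) = -1 by norm_num, Real.rpow_neg_one]
  ring

lemma S_reflect {y : ℝ} (h0 : 0 < y) (h1 : y < 1) : S (1-y) = 1 - S y := by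
  rcases lt_trichotomy y (1/2) with h | h | h
  · exact S_reflect_lt h0 h
  · rw [h]; norm_num [S_half]
  · have := S_reflect_lt (y := 1-y) (by linarith) (by linarith)
    rw [show (1:ℝ) - (1-y) = y from by ring] at this
    linarith

lemma qm_eq_S {x : ℝ} (h : x ≠ 1) : questionMark x = S x := by
  rw [questionMark, if_neg h]; rfl

lemma qm_one : questionMark 1 = 1 := by rw [questionMark, if_pos rfl]

lemma qm_abs_le (x : ℝ) : |questionMark x| ≤ 2 := by
  by_cases h : x = 1
  · rw [h, qm_one]; norm_num
  · rw [qm_eq_S h]; exact S_abs_le x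

lemma qm_key {m : ℤ} (hm : 2 ≤ m) {y : ℝ} (hy0 : 0 < y) (hy1 : y ≤ 1) :
    questionMark (1/((m:ℝ) - y)) = (2:ℝ)^((1:ℤ) - m) * (1 + questionMark y) := by
  have hm1 : (1:ℝ) ≤ (m:ℝ) - 1 := by
    have : (2:ℝ) ≤ (m:ℝ) := by exact_mod_cast hm
    linarith
  rcases eq_or_lt_of_le hy1 with rfl | hy1'
  · -- y = 1
    rcases eq_or_lt_of_le hm with rfl | hm3
    · -- m = 2
      norm_num [qm_one]
    · have hm3' : (3:ℤ) ≤ m := hm3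
      have hm3r : (3:ℝ) ≤ (m:ℝ) := by exact_mod_cast hm3'
      set x : ℝ := 1/((m:ℝ) - 1) with hxdef
      have hd : (0:ℝ) < (m:ℝ) - 1 := by linarith
      have hx0 : 0 < x := by positivity
      have hx1 : x < 1 := by
        rw [hxdef, div_lt_one hd]; linarith
      have hxinv : x⁻¹ = (m:ℝ) - 1 := by
        rw [hxdef, one_div, inv_inv]
      have hfl : ⌊x⁻¹⌋ = m - 1 := by
        rw [hxinv, show (m:ℝ) - 1 = ((m - 1 : ℤ):ℝ) by push_cast; ring, Int.floor_intCast]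
      have hfr : fract x⁻¹ = 0 := by
        rw [hxinv, show (m:ℝ) - 1 = ((m - 1 : ℤ):ℝ) by push_cast; ring, Int.fract_intCast]
      have h := S_rec hx0 hx1
      rw [hfl, hfr, S_zero] at h
      rw [qm_eq_S hx1.ne, qm_one, h]
      rw [← Real.rpow_intCast (2:ℝ) (1 - m)]
      push_cast
      rw [show (1:ℝ) - ((m:ℝ) - 1) = (1 - (m:ℝ)) + 1 by ring,
        Real.rpow_add two_pos, Real.rpow_one]
      ring
  · -- y < 1
    set x : ℝ := 1/((m:ℝ) - y) with hxdef
    have hd : (1:ℝ) < (m:ℝ) - y := by linarith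
    have hd0 : (0:ℝ) < (m:ℝ) - y := by linarith
    have hx0 : 0 < x := by positivity
    have hx1 : x < 1 := by rw [hxdef, div_lt_one hd0]; linarith
    have hxinv : x⁻¹ = (m:ℝ) - y := by rw [hxdef, one_div, inv_inv]
    have hfl : ⌊x⁻¹⌋ = m - 1 := by
      rw [hxinv]
      have : ((m - 1 : ℤ):ℝ) ≤ (m:ℝ) - y ∧ (m:ℝ) - y < (m - 1 : ℤ) + 1 := by
        constructor <;> push_cast <;> linarith
      exact Int.floor_eq_iff.mpr this
    have hfr : fract x⁻¹ = 1 - y := by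
      rw [Int.fract, hfl, hxinv]
      push_cast
      ring
    have h := S_rec hx0 hx1
    rw [hfl, hfr, S_reflect hy0 hy1'] at h
    rw [qm_eq_S hx1.ne, qm_eq_S hy1'.ne, h]
    rw [← Real.rpow_intCast (2:ℝ) (1 - m)]
    have e1 : (2:ℝ)^((1:ℝ) - ((m - 1:ℤ):ℝ)) = 2 * (2:ℝ)^((1:ℝ) - (m:ℝ)) := by
      push_cast
      rw [show (1:ℝ) - ((m:ℝ) - 1) = ((1:ℝ) - (m:ℝ)) + 1 by ring,
        Real.rpow_add two_pos, Real.rpow_one]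
      ring
    have e2 : (2:ℝ)^(-((m - 1:ℤ):ℝ)) = 2 * (2:ℝ)^(-((m:ℝ))) := by
      push_cast
      rw [show -((m:ℝ) - 1) = (-(m:ℝ)) + 1 by ring,
        Real.rpow_add two_pos, Real.rpow_one]
      ring
    have e3 : (2:ℝ)^((1:ℝ) - (m:ℝ)) = 2 * (2:ℝ)^(-((m:ℝ))) := by
      rw [show (1:ℝ) - (m:ℝ) = (-(m:ℝ)) + 1 by ring,
        Real.rpow_add two_pos, Real.rpow_one]
      ring
    push_cast at e1 e2 ⊢
    rw [e1, e2, e3]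
    ring

/-! ### The series side -/

noncomputable def F (b : ℕ → ℤ) : ℝ :=
  ∑' ℓ : ℕ, (2:ℝ)^(((ℓ : ℤ) + 1) - ∑ i ∈ Finset.range (ℓ + 1), b i)

lemma F_term_bound {b : ℕ → ℤ} (hb : ∀ i, 2 ≤ b i) (ℓ : ℕ) :
    (2:ℝ)^(((ℓ : ℤ) + 1) - ∑ i ∈ Finset.range (ℓ + 1), b i) ≤ (1/2:ℝ)^(ℓ+1) := by
  have hB : 2 * ((ℓ:ℤ) + 1) ≤ ∑ i ∈ Finset.range (ℓ + 1), b i := by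
    calc 2 * ((ℓ:ℤ) + 1) = ∑ _i ∈ Finset.range (ℓ + 1), (2:ℤ) := by
          rw [Finset.sum_const, Finset.card_range]; push_cast; ring
      _ ≤ _ := Finset.sum_le_sum (fun i _ => hb i)
  have he : ((ℓ : ℤ) + 1) - ∑ i ∈ Finset.range (ℓ + 1), b i ≤ -((ℓ:ℤ)+1) := by linarith
  calc (2:ℝ)^(((ℓ : ℤ) + 1) - ∑ i ∈ Finset.range (ℓ + 1), b i)
      ≤ (2:ℝ)^(-((ℓ:ℤ)+1)) := zpow_le_zpow_right₀ one_le_two he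
    _ = (1/2:ℝ)^(ℓ+1) := by
        rw [one_div, inv_pow, ← zpow_natCast (2:ℝ) (ℓ+1), ← zpow_neg]
        norm_num

lemma F_summable {b : ℕ → ℤ} (hb : ∀ i, 2 ≤ b i) :
    Summable (fun ℓ : ℕ => (2:ℝ)^(((ℓ : ℤ) + 1) - ∑ i ∈ Finset.range (ℓ + 1), b i)) := by
  apply Summable.of_nonneg_of_le (fun ℓ => by positivity) (F_term_bound hb)
  have : Summable (fun ℓ : ℕ => (1/2:ℝ)^ℓ) :=
    summable_geometric_of_lt_one (by norm_num) (by norm_num)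
  exact this.comp_injective (add_left_injective 1) |>.congr (fun n => rfl)

lemma F_nonneg (b : ℕ → ℤ) : 0 ≤ F b :=
  tsum_nonneg (fun ℓ => by positivity)

lemma F_le_one {b : ℕ → ℤ} (hb : ∀ i, 2 ≤ b i) : F b ≤ 1 := by
  have hg : Summable (fun ℓ : ℕ => (1/2:ℝ)^(ℓ+1)) := by
    have : Summable (fun ℓ : ℕ => (1/2:ℝ)^ℓ) :=
      summable_geometric_of_lt_one (by norm_num) (by norm_num)
    exact this.comp_injective (add_left_injective 1) |>.congr (fun n => rfl)
  have h1 : F b ≤ ∑' ℓ : ℕ, (1/2:ℝ)^(ℓ+1) :=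
    Summable.tsum_le_tsum (F_term_bound hb) (F_summable hb) hg
  have h2 : ∑' ℓ : ℕ, (1/2:ℝ)^(ℓ+1) = 1 := by
    have : ∀ ℓ : ℕ, (1/2:ℝ)^(ℓ+1) = (1/2) * (1/2)^ℓ := fun ℓ => by ring
    rw [tsum_congr this, tsum_mul_left,
      tsum_geometric_of_lt_one (by norm_num) (by norm_num)]
    norm_num
  linarith

lemma F_rec {b : ℕ → ℤ} (hb : ∀ i, 2 ≤ b i) :
    F b = (2:ℝ)^((1:ℤ) - b 0) * (1 + F (fun i => b (i+1))) := by
  have hsum := F_summable hb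
  rw [F, Summable.tsum_eq_zero_add hsum]
  have h0 : (2:ℝ)^(((0:ℕ) : ℤ) + 1 - ∑ i ∈ Finset.range (0 + 1), b i)
      = (2:ℝ)^((1:ℤ) - b 0) := by
    norm_num
  have hsucc : ∀ ℓ : ℕ, (2:ℝ)^((((ℓ+1:ℕ)) : ℤ) + 1 - ∑ i ∈ Finset.range ((ℓ+1) + 1), b i)
      = (2:ℝ)^((1:ℤ) - b 0) * (2:ℝ)^(((ℓ : ℤ) + 1) - ∑ i ∈ Finset.range (ℓ + 1), (fun i => b (i+1)) i) := by
    intro ℓ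
    rw [← zpow_add₀ (two_ne_zero)]
    congr 1
    rw [Finset.sum_range_succ' b (ℓ+1)]
    push_cast
    ring
  rw [h0, tsum_congr hsucc, tsum_mul_left]
  rw [show F (fun i => b (i+1)) = ∑' ℓ : ℕ, (2:ℝ)^(((ℓ : ℤ) + 1) - ∑ i ∈ Finset.range (ℓ + 1), b (i+1)) from rfl]
  ring

/-! ### srcf bounds -/

lemma srcf_bounds : ∀ l : List ℝ, (∀ r ∈ l, (2:ℝ) ≤ r) → 0 ≤ srcf l ∧ srcf l ≤ 1 := by
  intro l
  induction l with
  | nil => intro _; simp [srcf]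
  | cons c t ih =>
    intro h
    have hc : (2:ℝ) ≤ c := h c List.mem_cons_self
    have ht := ih (fun r hr => h r (List.mem_cons_of_mem c hr))
    have hd : (1:ℝ) ≤ c - srcf t := by linarith [ht.1, ht.2]
    have hd0 : (0:ℝ) < c - srcf t := by linarith
    constructor
    · rw [srcf]; positivity
    · rw [srcf, div_le_one hd0]; linarith

lemma srcf_cons_lb {c : ℝ} (hc : (2:ℝ) ≤ c) {t : List ℝ} (ht : ∀ r ∈ t, (2:ℝ) ≤ r) :
    1/c ≤ srcf (c :: t) := by
  have h := srcf_bounds t ht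
  have hd0 : (0:ℝ) < c - srcf t := by linarith [h.1, h.2]
  rw [srcf]
  have hc0 : (0:ℝ) < c := by linarith
  apply one_div_le_one_div_of_le hd0
  linarith [h.1]


lemma ofFn_mem_ge {b : ℕ → ℤ} (hb : ∀ i, 2 ≤ b i) (ℓ : ℕ) :
    ∀ r ∈ List.ofFn (fun i : Fin ℓ => ((b i : ℤ) : ℝ)), (2:ℝ) ≤ r := by
  intro r hr
  obtain ⟨i, rfl⟩ := List.mem_ofFn.mp hr
  show (2:ℝ) ≤ ((b (i:ℕ) : ℤ) : ℝ)
  exact_mod_cast hb (i:ℕ)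

lemma ofFn_cons {b : ℕ → ℤ} (ℓ : ℕ) :
    List.ofFn (fun i : Fin (ℓ+1) => ((b i : ℤ) : ℝ))
      = ((b 0 : ℤ) : ℝ) :: List.ofFn (fun i : Fin ℓ => ((b (i+1) : ℤ) : ℝ)) := by
  rw [List.ofFn_succ]
  rfl

lemma approx : ∀ n : ℕ, ∀ b : ℕ → ℤ, (∀ i, 2 ≤ b i) → ∀ x : ℝ,
    Tendsto (fun ℓ : ℕ => srcf (List.ofFn fun i : Fin ℓ => (b i : ℝ))) atTop (nhds x) →
    |F b - questionMark x| ≤ 3 / 2^n := by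
  intro n
  induction n with
  | zero =>
    intro b hb x _
    have h1 : |F b| ≤ 1 := by
      rw [abs_of_nonneg (F_nonneg b)]; exact F_le_one hb
    have h2 := qm_abs_le x
    calc |F b - questionMark x| ≤ |F b| + |questionMark x| := abs_sub _ _
      _ ≤ 3 / 2^0 := by norm_num; linarith
  | succ n ih =>
    intro b hb x hx
    set b' : ℕ → ℤ := fun i => b (i+1) with hb'def
    have hb' : ∀ i, 2 ≤ b' i := fun i => hb (i+1)
    set g : ℕ → ℝ := fun ℓ => srcf (List.ofFn fun i : Fin ℓ => (b i : ℝ)) with hgdef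
    set h : ℕ → ℝ := fun ℓ => srcf (List.ofFn fun i : Fin ℓ => (b' i : ℝ)) with hhdef
    have hb0r : (2:ℝ) ≤ ((b 0 : ℤ) : ℝ) := by exact_mod_cast hb 0
    have hb0pos : (0:ℝ) < ((b 0 : ℤ) : ℝ) := by linarith
    -- bounds on g (ℓ+1)
    have hglb : ∀ ℓ, 1/((b 0 : ℤ):ℝ) ≤ g (ℓ+1) := by
      intro ℓ
      rw [hgdef]
      simp only
      rw [ofFn_cons]
      exact srcf_cons_lb hb0r (ofFn_mem_ge hb' ℓ)
    have hgub : ∀ ℓ, g ℓ ≤ 1 := fun ℓ => (srcf_bounds _ (ofFn_mem_ge hb ℓ)).2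
    have hgx1 : Tendsto (fun ℓ => g (ℓ+1)) atTop (nhds x) :=
      hx.comp (tendsto_add_atTop_nat 1)
    have hx0 : 0 < x := by
      have hle : 1/((b 0 : ℤ):ℝ) ≤ x :=
        ge_of_tendsto hgx1 (Eventually.of_forall hglb)
      have hpos : (0:ℝ) < 1/((b 0 : ℤ):ℝ) := by positivity
      exact lt_of_lt_of_le hpos hle
    have hxle1 : x ≤ 1 := le_of_tendsto hx (Eventually.of_forall hgub)
    -- tail limit y
    set y : ℝ := ((b 0 : ℤ):ℝ) - x⁻¹ with hydef
    have hcons : ∀ ℓ, g (ℓ+1) = 1/(((b 0 : ℤ):ℝ) - h ℓ) := by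
      intro ℓ
      rw [hgdef, hhdef]
      simp only
      rw [ofFn_cons]
      rfl
    have hhb : ∀ ℓ, h ℓ = ((b 0 : ℤ):ℝ) - (g (ℓ+1))⁻¹ := by
      intro ℓ
      have hb1 : (1:ℝ) ≤ ((b 0 : ℤ):ℝ) - h ℓ := by
        have h01 : 0 ≤ h ℓ ∧ h ℓ ≤ 1 := srcf_bounds _ (ofFn_mem_ge hb' ℓ)
        linarith [h01.1, h01.2]
      have hb1' : ((b 0 : ℤ):ℝ) - h ℓ ≠ 0 := by linarith
      rw [hcons ℓ, one_div, inv_inv]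
      ring
    have hht : Tendsto h atTop (nhds y) := by
      rw [show h = fun ℓ => ((b 0 : ℤ):ℝ) - (g (ℓ+1))⁻¹ from funext hhb, hydef]
      exact tendsto_const_nhds.sub (hgx1.inv₀ hx0.ne')
    -- y bounds
    have hb1r : (2:ℝ) ≤ ((b 1 : ℤ) : ℝ) := by exact_mod_cast hb 1
    have hhlb : ∀ ℓ, 1/((b 1 : ℤ):ℝ) ≤ h (ℓ+1) := by
      intro ℓ
      rw [hhdef]
      simp only
      rw [ofFn_cons]
      exact srcf_cons_lb hb1r (ofFn_mem_ge (fun i => hb' (i+1)) ℓ)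
    have hhub : ∀ ℓ, h ℓ ≤ 1 := fun ℓ => (srcf_bounds _ (ofFn_mem_ge hb' ℓ)).2
    have hy0 : 0 < y := by
      have hle : 1/((b 1 : ℤ):ℝ) ≤ y :=
        ge_of_tendsto (hht.comp (tendsto_add_atTop_nat 1)) (Eventually.of_forall hhlb)
      have hpos : (0:ℝ) < 1/((b 1 : ℤ):ℝ) := by positivity
      exact lt_of_lt_of_le hpos hle
    have hy1 : y ≤ 1 := le_of_tendsto hht (Eventually.of_forall hhub)
    -- x = 1/(b0 - y)
    have hxy : x = 1/(((b 0 : ℤ):ℝ) - y) := by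
      rw [hydef]
      field_simp
      ring
    -- apply functional equations
    have hQ : questionMark x = (2:ℝ)^((1:ℤ) - b 0) * (1 + questionMark y) := by
      rw [hxy]; exact qm_key (hb 0) hy0 hy1
    have hF : F b = (2:ℝ)^((1:ℤ) - b 0) * (1 + F b') := F_rec hb
    have hIH : |F b' - questionMark y| ≤ 3 / 2^n := ih b' hb' y hht
    have hpow : (0:ℝ) < (2:ℝ)^((1:ℤ) - b 0) := by positivity
    have hpowle : (2:ℝ)^((1:ℤ) - b 0) ≤ 1/2 := by
      have : ((1:ℤ) - b 0) ≤ -1 := by linarith [hb 0]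
      calc (2:ℝ)^((1:ℤ) - b 0) ≤ (2:ℝ)^(-1:ℤ) := zpow_le_zpow_right₀ one_le_two this
        _ = 1/2 := by norm_num
    calc |F b - questionMark x|
        = (2:ℝ)^((1:ℤ) - b 0) * |F b' - questionMark y| := by
          rw [hF, hQ, ← mul_sub, abs_mul, abs_of_pos hpow]
          ring_nf
      _ ≤ (1/2) * (3 / 2^n) := by
          apply mul_le_mul hpowle hIH (abs_nonneg _) (by norm_num)
      _ = 3 / 2^(n+1) := by ring



end QMaux

/-- For integers `b_i ≥ 2`, the series `∑_{ℓ≥1} 2^{ℓ−(b₁+⋯+b_ℓ)}` converges and its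
value is `?(x)`, where `x = [[b₁,b₂,…]]` is the value of the infinite semi-regular
continued fraction (the limit of its finite truncations). -/
theorem questionMark_semiregular (b : ℕ → ℤ) (hb : ∀ i, 2 ≤ b i) (x : ℝ)
    (hx : Filter.Tendsto (fun ℓ : ℕ => srcf (List.ofFn fun i : Fin ℓ => (b i : ℝ)))
      Filter.atTop (nhds x)) :
    Summable (fun ℓ : ℕ => (2 : ℝ) ^ (((ℓ : ℤ) + 1) - ∑ i ∈ Finset.range (ℓ + 1), b i)) ∧
    ∑' ℓ : ℕ, (2 : ℝ) ^ (((ℓ : ℤ) + 1) - ∑ i ∈ Finset.range (ℓ + 1), b i)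
      = questionMark x := by
  refine ⟨QMaux.F_summable hb, ?_⟩
  have happ := fun n => QMaux.approx n b hb x hx
  have hlim : Tendsto (fun n : ℕ => (3:ℝ) / 2^n) atTop (nhds 0) := by
    have h2 : Tendsto (fun n : ℕ => ((1:ℝ)/2)^n) atTop (nhds 0) :=
      tendsto_pow_atTop_nhds_zero_of_lt_one (by norm_num) (by norm_num)
    have := h2.const_mul (3:ℝ)
    simpa [div_eq_mul_inv, mul_comm, inv_pow] using this
  have hle : |QMaux.F b - questionMark x| ≤ 0 :=
    ge_of_tendsto hlim (Eventually.of_forall happ)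
  have : QMaux.F b = questionMark x := by
    have := abs_nonneg (QMaux.F b - questionMark x)
    have h0 : |QMaux.F b - questionMark x| = 0 := le_antisymm hle this
    have := abs_eq_zero.mp h0
    linarith
  exact this
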